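/- arXiv:2505.10809 — 4 statements merged into one kernel-verified Lean document; each statement's English description precedes it below -/
import Mathlib

section
/- Let C be a small pointed category admitting finite limits and finite colimits, and let n ≥ 0 be an integer. Then the following conditions are equivalent: (1) every object X of C is n-excisive, i.e. for every object X the corepresentable functor Hom_C(X, −) : C ⥤ Type is n-excisive; (2) the identity functor of C is n-excisive; (3) the Yoneda embedding C ⥤ Fun(C^op, Type) is n-excisive. -/
open CategoryTheory CategoryTheory.Limits

universe v u v' u'

variable {σ : Type} {C : Type u} [Category.{v} C]

/-- The canonical cone with vertex `X ∅` over the restriction of the `S`-cube `X`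
to the poset of nonempty subsets of `S`. -/
def cartesianCone (X : Finset σ ⥤ C) :
    Cone (ObjectProperty.ι (fun T : Finset σ => T.Nonempty) ⋙ X) where
  pt := X.obj ∅
  π :=
    { app := fun T => X.map (homOfLE (Finset.empty_subset T.obj))
      naturality := fun T T' f => by
        dsimp
        rw [Category.id_comp, ← X.map_comp]
        rfl }

/-- An `S`-cube is Cartesian if the canonical cone with vertex `X ∅` over its restriction
to nonempty subsets is a limit cone. -/
def IsCartesianCube (X : Finset σ ⥤ C) : Prop :=
  Nonempty (IsLimit (cartesianCone X))

/-- The canonical cocone with vertex `X T` over the restriction of the `S`-cube `X`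
to the poset of subsets of `T` having at most one element. -/
def cubeCocone (X : Finset σ ⥤ C) (T : Finset σ) :
    Cocone (ObjectProperty.ι
      (fun T' : Finset σ => T'.card ≤ 1 ∧ T' ⊆ T) ⋙ X) where
  pt := X.obj T
  ι :=
    { app := fun T' => X.map (homOfLE T'.property.2)
      naturality := fun T' T'' f => by
        dsimp
        rw [Category.comp_id, ← X.map_comp]
        rfl }

/-- An `S`-cube `X` is strongly coCartesian if it is a pointwise left Kan extension of its
restriction to the poset `P_{≤1}(S)` of subsets having at most one element: i.e. for every
`T ⊆ S`, the canonical cocone with vertex `X T` over the restriction of `X` to subsets of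
`T` with at most one element is a colimit cocone. -/
def IsStronglyCoCartesian (X : Finset σ ⥤ C) : Prop :=
  ∀ T : Finset σ, Nonempty (IsColimit (cubeCocone X T))

/-- A functor `F : C ⥤ D` is `n`-excisive if for every finite set `S` with exactly `n + 1`
elements, `F` sends strongly coCartesian `S`-cubes of `C` to Cartesian `S`-cubes of `D`. -/
def IsExcisive {D : Type u'} [Category.{v'} D] (n : ℕ) (F : C ⥤ D) : Prop :=
  ∀ (σ : Type) [Fintype σ], Fintype.card σ = n + 1 →
    ∀ X : Finset σ ⥤ C, IsStronglyCoCartesian X → IsCartesianCube (X ⋙ F)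


section Aux

/-- Transport of the Cartesian cone along postcomposition with a functor. -/
noncomputable def isLimitMapEquiv {D : Type u'} [Category.{v'} D] (F : C ⥤ D)
    (X : Finset σ ⥤ C) :
    IsLimit (cartesianCone (X ⋙ F)) ≃ IsLimit (F.mapCone (cartesianCone X)) :=
  IsLimit.equivIsoLimit (Cones.ext (Iso.refl _) (fun T => by
    simp [cartesianCone]))

lemma isCartesianCube_iff_coyoneda (X : Finset σ ⥤ C) :
    IsCartesianCube X ↔
      ∀ W : C, IsCartesianCube (X ⋙ coyoneda.obj (Opposite.op W)) := by
  constructor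
  · rintro ⟨h⟩ W
    exact ⟨(isLimitMapEquiv _ X).symm (isLimitOfPreserves _ h)⟩
  · intro h
    exact ⟨coyonedaJointlyReflectsLimits _ _
      (fun W => (isLimitMapEquiv _ X) (h W.unop).some)⟩

/-- Evaluating the yoneda cube at `c` gives the coyoneda cube. -/
noncomputable def isLimitEvalEquiv (X : Finset σ ⥤ C) (c : Cᵒᵖ) :
    IsLimit (cartesianCone (X ⋙ coyoneda.obj c)) ≃
      IsLimit (((evaluation Cᵒᵖ (Type v)).obj c).mapCone
        (cartesianCone (X ⋙ yoneda))) :=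
  IsLimit.equivIsoLimit (Cones.ext (Iso.refl _) (fun T => by
    simp only [cartesianCone, Functor.mapCone_π_app, Category.id_comp]
    rfl))

lemma isCartesianCube_yoneda_iff (X : Finset σ ⥤ C) :
    IsCartesianCube (X ⋙ yoneda) ↔
      ∀ W : C, IsCartesianCube (X ⋙ coyoneda.obj (Opposite.op W)) := by
  constructor
  · rintro ⟨h⟩ W
    exact ⟨(isLimitEvalEquiv X (Opposite.op W)).symm
      (isLimitOfPreserves ((evaluation _ _).obj (Opposite.op W)) h)⟩
  · intro h
    exact ⟨evaluationJointlyReflectsLimits _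
      (fun c => isLimitEvalEquiv X c (h c.unop).some)⟩

end Aux

/-- For a small pointed category `C` with finite limits and finite colimits
and `n ≥ 0`, the following are equivalent: (1) every object of `C` is `n`-excisive, i.e. every
corepresentable functor `Hom_C(X, -) : C ⥤ Type` is `n`-excisive; (2) the identity functor of
`C` is `n`-excisive; (3) the Yoneda embedding `C ⥤ Fun(Cᵒᵖ, Type)` is `n`-excisive. -/
theorem excisive_tfae (C : Type u) [SmallCategory C] [HasZeroObject C]
    [HasFiniteLimits C] [HasFiniteColimits C] (n : ℕ) :
    List.TFAE
      [∀ X : C, IsExcisive n (coyoneda.obj (Opposite.op X)),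
        IsExcisive n (𝟭 C),
        IsExcisive n (yoneda : C ⥤ Cᵒᵖ ⥤ Type u)] := by
  tfae_have 1 ↔ 2 := by
    constructor
    · intro h σ' _ hcard X hX
      have : IsCartesianCube X :=
        (isCartesianCube_iff_coyoneda X).2 (fun W => h W σ' hcard X hX)
      rwa [Functor.comp_id]
    · intro h W σ' _ hcard X hX
      have h' : IsCartesianCube (X ⋙ 𝟭 C) := h σ' hcard X hX
      rw [Functor.comp_id] at h'
      exact (isCartesianCube_iff_coyoneda X).1 h' W
  tfae_have 1 ↔ 3 := by
    constructor
    · intro h σ' _ hcard X hX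
      exact (isCartesianCube_yoneda_iff X).2 (fun W => h W σ' hcard X hX)
    · intro h W σ' _ hcard X hX
      exact (isCartesianCube_yoneda_iff X).1 (h σ' hcard X hX) W
  tfae_finish
end

section
/- Let C be a category with finite colimits, S a finite set, and X : P(S) ⥤ C a strongly coCartesian S-cube. For a subset I ⊆ S, let X_I : P(S) ⥤ C be the S-cube defined by X_I(T) = X(I ∪ T), with structure maps induced by inclusions of subsets. Then X_I is a strongly coCartesian S-cube. -/
open CategoryTheory CategoryTheory.Limits

universe v u v' u'

variable {σ : Type} {C : Type u} [Category.{v} C]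

/-- For `I ⊆ S`, the monotone map `T ↦ I ∪ T` on subsets of `S`. -/
def unionLeftMonotone [DecidableEq σ] (I : Finset σ) :
    Monotone (fun T : Finset σ => I ∪ T) :=
  fun _ _ h => Finset.union_subset_union (Finset.Subset.refl I) h

section Aux

variable {σ : Type} [DecidableEq σ] {C : Type u} [Category.{v} C]

lemma subset_union_sdiff' (I T'' : Finset σ) : T'' ⊆ I ∪ T'' \ I := by
  intro x hx
  simp only [Finset.mem_union, Finset.mem_sdiff]
  tauto

lemma sdiff_subset_of' {I U T'' : Finset σ} (h : T'' ⊆ I ∪ U) : T'' \ I ⊆ U := by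
  intro x hx
  rcases Finset.mem_sdiff.mp hx with ⟨hx1, hx2⟩
  rcases Finset.mem_union.mp (h hx1) with h' | h'
  · exact absurd h' hx2
  · exact h'

/-- A morphism in a full subcategory of a poset from an inequality of underlying objects. -/
def homMk {P : Finset σ → Prop} {A B : ObjectProperty.FullSubcategory P} (h : A.obj ≤ B.obj) : A ⟶ B :=
  ObjectProperty.homMk (homOfLE h)

/-- Transport a cocone over the `T`-restriction of `X_I` to a cocone over the
`(I ∪ T)`-restriction of `X`. -/
def auxCocone (X : Finset σ ⥤ C) (I T : Finset σ)
    (c : Cocone (ObjectProperty.ι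
      (fun T' : Finset σ => T'.card ≤ 1 ∧ T' ⊆ T) ⋙ ((unionLeftMonotone I).functor ⋙ X))) :
    Cocone (ObjectProperty.ι
      (fun T' : Finset σ => T'.card ≤ 1 ∧ T' ⊆ I ∪ T) ⋙ X) where
  pt := c.pt
  ι :=
    { app := fun T'' =>
        X.map (homOfLE (subset_union_sdiff' I T''.obj)) ≫
          c.ι.app ⟨T''.obj \ I,
            le_trans (Finset.card_le_card (Finset.sdiff_subset)) T''.property.1,
            sdiff_subset_of' T''.property.2⟩
      naturality := fun A B f => by
        have hAB : A.obj \ I ⊆ B.obj \ I := Finset.sdiff_subset_sdiff (leOfHom f.hom) le_rfl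
        have := c.w (f := homMk (A := ⟨A.obj \ I,
            le_trans (Finset.card_le_card (Finset.sdiff_subset)) A.property.1,
            sdiff_subset_of' A.property.2⟩)
          (B := ⟨B.obj \ I,
            le_trans (Finset.card_le_card (Finset.sdiff_subset)) B.property.1,
            sdiff_subset_of' B.property.2⟩) hAB)
        dsimp at this ⊢
        rw [Category.comp_id, ← this]
        erw [← X.map_comp_assoc, ← X.map_comp_assoc]
        rfl }

end Aux

/-- Let `C` be a category with finite colimits, `S` a finite set, and
`X : P(S) ⥤ C` a strongly coCartesian `S`-cube. For `I ⊆ S`, the `S`-cube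
`X_I : T ↦ X (I ∪ T)` is again strongly coCartesian. -/
theorem stronglyCoCartesian_union {σ : Type} [Fintype σ] [DecidableEq σ]
    {C : Type u} [Category.{v} C] [HasFiniteColimits C]
    (X : Finset σ ⥤ C) (hX : IsStronglyCoCartesian X) (I : Finset σ) :
    IsStronglyCoCartesian ((unionLeftMonotone I).functor ⋙ X) := by
  intro T
  obtain ⟨hU⟩ := hX (I ∪ T)
  refine ⟨{ desc := fun c => hU.desc (auxCocone X I T c), fac := ?_, uniq := ?_ }⟩
  · intro c T'
    obtain ⟨hT'⟩ := hX (I ∪ T'.obj)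
    apply hT'.hom_ext
    intro T''
    have hsub : T''.obj ⊆ I ∪ T := T''.property.2.trans
      (Finset.union_subset_union le_rfl T'.property.2)
    have h1 := hU.fac (auxCocone X I T c) ⟨T''.obj, T''.property.1, hsub⟩
    have h2 : (cubeCocone X (I ∪ T'.obj)).ι.app T'' ≫
        (cubeCocone ((unionLeftMonotone I).functor ⋙ X) T).ι.app T' =
        (cubeCocone X (I ∪ T)).ι.app ⟨T''.obj, T''.property.1, hsub⟩ := by
      dsimp [cubeCocone]
      erw [← X.map_comp]; rfl
    erw [← Category.assoc, h2, h1]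
    -- now show auxCocone component equals restriction of c along T'
    have hd : T''.obj \ I ⊆ T'.obj := by
      intro x hx
      rcases Finset.mem_sdiff.mp hx with ⟨hx1, hx2⟩
      rcases Finset.mem_union.mp (T''.property.2 hx1) with h | h
      · exact absurd h hx2
      · exact h
    have h3 := c.w (f := homMk (A := ⟨T''.obj \ I,
        le_trans (Finset.card_le_card (Finset.sdiff_subset)) T''.property.1,
        sdiff_subset_of'
          (T''.property.2.trans (Finset.union_subset_union le_rfl T'.property.2))⟩)
      (B := T') hd)
    dsimp [auxCocone, cubeCocone] at h3 ⊢
    rw [← h3]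
    erw [← X.map_comp_assoc]
    rfl
  · intro c m hm
    apply hU.hom_ext
    intro T''
    have h1 := hU.fac (auxCocone X I T c) T''
    erw [h1]
    have hd : T''.obj \ I ⊆ T := sdiff_subset_of' T''.property.2
    have h2 := hm ⟨T''.obj \ I,
        le_trans (Finset.card_le_card (Finset.sdiff_subset)) T''.property.1, hd⟩
    dsimp [auxCocone, cubeCocone] at h2 ⊢
    rw [← h2]
    erw [← X.map_comp_assoc]
    rfl
end

section
/- Let S be a finite set and S' ⊆ S a nonempty subset. Let P_{≠∅}(S) denote the poset of nonempty subsets of S and P_{S'}(S) the poset of subsets of S containing S', both ordered by inclusion and regarded as categories. Then the monotone map P_{≠∅}(S) → P_{S'}(S) given by I ↦ I ∪ S' is an initial (limit-cofinal) functor. Consequently, for every category D with finite limits and every functor G : P_{S'}(S) ⥤ D, the canonical map G(S') → lim_{∅ ≠ I ⊆ S} G(I ∪ S') is an isomorphism. -/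
open CategoryTheory CategoryTheory.Limits

universe v u

variable {σ : Type} [DecidableEq σ]

/-- For a subset `S' ⊆ S`, the monotone map `I ↦ I ∪ S'` from the poset `P_{≠∅}(S)` of
nonempty subsets of `S` to the poset `P_{S'}(S)` of subsets of `S` containing `S'`. -/
def unionWithMonotone (S' : Finset σ) :
    Monotone (fun I : {I : Finset σ // I.Nonempty} =>
      (⟨I.1 ∪ S', Finset.subset_union_right⟩ : {T : Finset σ // S' ⊆ T})) :=
  fun _ _ h => Finset.union_subset_union h (Finset.Subset.refl S')

/-- The canonical cone with vertex `G S'` over the diagram `I ↦ G (I ∪ S')` indexed by the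
poset of nonempty subsets of `S`; its legs are induced by the inclusions `S' ⊆ I ∪ S'`. -/
def canonicalUnionCone (S' : Finset σ) {D : Type u} [Category.{v} D]
    (G : {T : Finset σ // S' ⊆ T} ⥤ D) :
    Cone ((unionWithMonotone S').functor ⋙ G) where
  pt := G.obj ⟨S', Finset.Subset.refl S'⟩
  π :=
    { app := fun I => G.map (homOfLE (Subtype.mk_le_mk.mpr Finset.subset_union_right))
      naturality := fun I I' f => by
        dsimp
        rw [Category.id_comp]
        first
          | (erw [← G.map_comp]; rfl)
          | exact (G.map_comp _ _).symm }

theorem aux_initial {σ : Type} [DecidableEq σ] (S' : Finset σ) (hS' : S'.Nonempty) :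
    (unionWithMonotone S').functor.Initial := by
  constructor
  intro T
  have hne : Nonempty (CostructuredArrow (unionWithMonotone S').functor T) :=
    ⟨CostructuredArrow.mk (Y := ⟨S', hS'⟩)
      (homOfLE (Subtype.mk_le_mk.mpr (Finset.union_subset T.2 T.2)))⟩
  apply zigzag_isConnected
  intro o1 o2
  let J : {I : Finset σ // I.Nonempty} :=
    ⟨o1.left.1 ∪ o2.left.1, Finset.Nonempty.mono Finset.subset_union_left o1.left.2⟩
  have h1 : (unionWithMonotone S').functor.obj J ≤ T := by
    refine Finset.union_subset (Finset.union_subset ?_ ?_) ?_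
    · exact (Finset.union_subset_iff.mp (leOfHom o1.hom)).1
    · exact (Finset.union_subset_iff.mp (leOfHom o2.hom)).1
    · exact T.2
  let o3 : CostructuredArrow (unionWithMonotone S').functor T :=
    CostructuredArrow.mk (Y := J) (homOfLE h1)
  have f1 : o1 ⟶ o3 :=
    CostructuredArrow.homMk (homOfLE (Subtype.mk_le_mk.mpr Finset.subset_union_left))
      (Subsingleton.elim _ _)
  have f2 : o2 ⟶ o3 :=
    CostructuredArrow.homMk (homOfLE (Subtype.mk_le_mk.mpr Finset.subset_union_right))
      (Subsingleton.elim _ _)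
  exact Relation.ReflTransGen.trans (.single (Or.inl ⟨f1⟩)) (.single (Or.inr ⟨f2⟩))

/-- Let `S` be a finite set and `S' ⊆ S` nonempty. The monotone map
`P_{≠∅}(S) → P_{S'}(S)`, `I ↦ I ∪ S'`, is an initial (limit-cofinal) functor. Consequently,
for every category `D` with finite limits and every functor `G : P_{S'}(S) ⥤ D`, the
canonical map `G S' → lim_{∅ ≠ I ⊆ S} G (I ∪ S')` is an isomorphism, i.e. the canonical
cone with vertex `G S'` is a limit cone. -/
theorem unionWith_initial {σ : Type} [Fintype σ] [DecidableEq σ]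
    (S' : Finset σ) (hS' : S'.Nonempty) :
    (unionWithMonotone S').functor.Initial ∧
    ∀ (D : Type u) [Category.{v} D] [HasFiniteLimits D]
      (G : {T : Finset σ // S' ⊆ T} ⥤ D),
      Nonempty (IsLimit (canonicalUnionCone S' G)) := by
  haveI hInit := aux_initial S' hS'
  refine ⟨hInit, ?_⟩
  intro D _ _ G
  have hbot : IsInitial (⟨S', Finset.Subset.refl S'⟩ : {T : Finset σ // S' ⊆ T}) :=
    IsInitial.ofUniqueHom (fun T => homOfLE T.2) (fun _ _ => Subsingleton.elim _ _)
  have l0 : IsLimit (coneOfDiagramInitial hbot G) := limitOfDiagramInitial hbot G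
  have lw : IsLimit ((coneOfDiagramInitial hbot G).whisker (unionWithMonotone S').functor) :=
    (Functor.Initial.isLimitWhiskerEquiv (unionWithMonotone S').functor _).symm l0
  refine ⟨lw.ofIsoLimit (Cones.ext (Iso.refl _) (fun I => ?_))⟩
  dsimp [coneOfDiagramInitial, canonicalUnionCone]
  rw [Category.id_comp]
  congr 1
end

section
/- Let V be a commutative ring and 𝔪 an idempotent ideal of V (𝔪 · 𝔪 = 𝔪), and assume m̃ := 𝔪 ⊗_V 𝔪 is a flat V-module. Then for every V-module M, the V-linear map 𝔪 ⊗_V (m̃ ⊗_V M) → m̃ ⊗_V M induced by the inclusion 𝔪 ↪ V (i.e. x ⊗ n ↦ x • n) is bijective; that is, the V-module m̃ ⊗_V M is firm. -/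
open TensorProduct

set_option synthInstance.maxHeartbeats 400000
set_option maxHeartbeats 1000000

universe u

/-- The canonical `V`-linear map `𝔪 ⊗[V] N → N` induced by the inclusion `𝔪 ↪ V`,
sending `x ⊗ n` to `x • n`. A `V`-module `N` is *firm* when this map is bijective. -/
noncomputable def firmMap {V : Type u} [CommRing V] (𝔪 : Ideal V) (N : Type u)
    [AddCommGroup N] [Module V N] : (𝔪 ⊗[V] N) →ₗ[V] N :=
  TensorProduct.lift ((LinearMap.lsmul V N).comp 𝔪.subtype)

lemma firmMap_tmul {V : Type u} [CommRing V] (𝔪 : Ideal V) {N : Type u}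
    [AddCommGroup N] [Module V N] (x : 𝔪) (n : N) :
    firmMap 𝔪 N (x ⊗ₜ n) = (x : V) • n := rfl

lemma firmMap_eq_comp {V : Type u} [CommRing V] (𝔪 : Ideal V) (N : Type u)
    [AddCommGroup N] [Module V N] :
    firmMap 𝔪 N = (TensorProduct.lid V N).toLinearMap ∘ₗ 𝔪.subtype.rTensor N := by
  ext x n
  simp [firmMap]

lemma firmMap_injective_of_flat {V : Type u} [CommRing V] (𝔪 : Ideal V) (N : Type u)
    [AddCommGroup N] [Module V N] [Module.Flat V N] :
    Function.Injective (firmMap 𝔪 N) := by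
  rw [firmMap_eq_comp]
  exact (TensorProduct.lid V N).injective.comp
    (Module.Flat.rTensor_preserves_injective_linearMap _ 𝔪.injective_subtype)

lemma firmMap_mtilde_surjective {V : Type u} [CommRing V] (𝔪 : Ideal V)
    (hidem : 𝔪 * 𝔪 = 𝔪) :
    Function.Surjective (firmMap 𝔪 (𝔪 ⊗[V] 𝔪)) := by
  set S := LinearMap.range (firmMap 𝔪 (𝔪 ⊗[V] 𝔪)) with hS
  have key : ∀ (a b : 𝔪), a ⊗ₜ[V] b ∈ S := by
    intro a b
    -- the submodule of elements `a` of `𝔪` with `a ⊗ b ∈ S`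
    set T : Submodule V 𝔪 :=
      Submodule.comap ((TensorProduct.mk V 𝔪 𝔪).flip b) S with hT
    have hsub : 𝔪 ≤ Submodule.map 𝔪.subtype T := by
      conv_lhs => rw [← hidem]
      refine Submodule.mul_le.2 fun x hx y hy => ?_
      refine ⟨x • (⟨y, hy⟩ : 𝔪), ?_, rfl⟩
      show (x • (⟨y, hy⟩ : 𝔪)) ⊗ₜ[V] b ∈ S
      refine ⟨(⟨x, hx⟩ : 𝔪) ⊗ₜ ((⟨y, hy⟩ : 𝔪) ⊗ₜ b), ?_⟩
      rw [firmMap_tmul, smul_tmul']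
    obtain ⟨t, ht, hteq⟩ := hsub a.2
    have : t = a := Subtype.ext hteq
    subst this
    exact ht
  intro z
  induction z using TensorProduct.induction_on with
  | zero => exact ⟨(0 : 𝔪 ⊗[V] (𝔪 ⊗[V] 𝔪)), map_zero _⟩
  | tmul a b => exact key a b
  | add x y hx hy =>
    obtain ⟨u, hu⟩ := hx; obtain ⟨v, hv⟩ := hy
    exact ⟨u + v, by rw [map_add, hu, hv]⟩

/-- Let `V` be a commutative ring and `𝔪` an idempotent ideal
(`𝔪 * 𝔪 = 𝔪`) such that `m̃ := 𝔪 ⊗[V] 𝔪` is a flat `V`-module. Then for every `V`-module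
`M`, the map `𝔪 ⊗[V] (m̃ ⊗[V] M) → m̃ ⊗[V] M` induced by the inclusion `𝔪 ↪ V`
(`x ⊗ n ↦ x • n`) is bijective; that is, the `V`-module `m̃ ⊗[V] M` is firm. -/
theorem tensor_firm {V : Type u} [CommRing V] (𝔪 : Ideal V)
    (hidem : 𝔪 * 𝔪 = 𝔪) [Module.Flat V (𝔪 ⊗[V] 𝔪)]
    (M : Type u) [AddCommGroup M] [Module V M] :
    Function.Bijective (firmMap 𝔪 ((𝔪 ⊗[V] 𝔪) ⊗[V] M)) := by
  have hbij : Function.Bijective (firmMap 𝔪 (𝔪 ⊗[V] 𝔪)) :=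
    ⟨firmMap_injective_of_flat 𝔪 _, firmMap_mtilde_surjective 𝔪 hidem⟩
  set e : (𝔪 ⊗[V] (𝔪 ⊗[V] 𝔪)) ≃ₗ[V] (𝔪 ⊗[V] 𝔪) :=
    LinearEquiv.ofBijective _ hbij with he
  have heq : firmMap 𝔪 ((𝔪 ⊗[V] 𝔪) ⊗[V] M)
      = (LinearEquiv.rTensor M e).toLinearMap ∘ₗ
        (TensorProduct.assoc V 𝔪 (𝔪 ⊗[V] 𝔪) M).symm.toLinearMap := by
    ext x n m
    simp [he, firmMap, smul_tmul']
  rw [heq]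
  exact ((LinearEquiv.rTensor M e).bijective.comp
    (TensorProduct.assoc V 𝔪 (𝔪 ⊗[V] 𝔪) M).symm.bijective)
end
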